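/- Let l and m be nonnegative integers. Then, as h → 0, the Obreshkov coefficients provide the (l, m) Padé-type approximation of the exponential: Σ_{i=0}^{m} (−1)^i · α_{i,l,m} · h^i · e^h − Σ_{i=0}^{l} α_{i,m,l} · h^i = O(h^{l+m+1}). -/

import Mathlib

open Finset Asymptotics

/-- The Obreshkov coefficient `α_{i,l,m} = ((m+l−i)! / (m+l)!) · binom(m, i)`. -/
noncomputable def obreshkovAlpha (i l m : ℕ) : ℝ :=
  (Nat.factorial (m + l - i) : ℝ) / (Nat.factorial (m + l)) * (Nat.choose m i)


lemma alt_pascal (m : ℕ) (c : ℕ → ℤ) :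
    ∑ k ∈ range (m+2), (-1:ℤ)^k * ((m+1).choose k) * c k
      = ∑ k ∈ range (m+1), (-1:ℤ)^k * (m.choose k) * (c k - c (k+1)) := by
  have h1 : ∑ k ∈ range (m+2), (-1:ℤ)^k * ((m+1).choose k) * c k
      = (∑ k ∈ range (m+1), (-1:ℤ)^(k+1) * ((m+1).choose (k+1)) * c (k+1)) + c 0 := by
    rw [Finset.sum_range_succ']; simp
  have h2 : ∑ k ∈ range (m+1), (-1:ℤ)^k * (m.choose k) * c k
      = (∑ k ∈ range (m+1), (-1:ℤ)^(k+1) * (m.choose (k+1)) * c (k+1)) + c 0 := by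
    rw [Finset.sum_range_succ']
    congr 1
    · rw [Finset.sum_range_succ]
      simp
    · norm_num
  have h4 : ∑ k ∈ range (m+1), (-1:ℤ)^k * (m.choose k) * (c k - c (k+1))
      = (∑ k ∈ range (m+1), (-1:ℤ)^k * (m.choose k) * c k)
        - ∑ k ∈ range (m+1), (-1:ℤ)^k * (m.choose k) * c (k+1) := by
    rw [← Finset.sum_sub_distrib]
    apply Finset.sum_congr rfl
    intro k _; ring
  rw [h1, h4, h2]
  have h3 : ∀ k ∈ range (m+1), (-1:ℤ)^(k+1) * ((m+1).choose (k+1)) * c (k+1)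
      = (-1:ℤ)^(k+1) * (m.choose (k+1)) * c (k+1) - ((-1:ℤ)^k * (m.choose k)) * c (k+1) := by
    intro k _
    rw [Nat.choose_succ_succ]
    push_cast
    ring
  rw [Finset.sum_congr rfl h3, Finset.sum_sub_distrib]
  ring

lemma key_int (m : ℕ) : ∀ n r : ℕ, m ≤ n →
    ∑ k ∈ range (m+1), (-1:ℤ)^k * (m.choose k) * ((n-k).choose r)
      = if m ≤ r then (((n-m).choose (r-m) : ℤ)) else (0:ℤ) := by
  induction m with
  | zero => intro n r _; simp
  | succ m ih =>
    intro n r hmn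
    rcases r with _ | s
    · have h0 : ∑ k ∈ range (m+1+1), (-1:ℤ)^k * ((m+1).choose k) * ((n-k).choose 0)
          = ∑ k ∈ range (m+1+1), (-1:ℤ)^k * ((m+1).choose k) := by
        apply Finset.sum_congr rfl; intro k _; simp
      rw [h0, Int.alternating_sum_range_choose]
      simp
    · rw [show m+1+1 = m+2 from rfl, alt_pascal m (fun k => ((n-k).choose (s+1) : ℤ))]
      have h5 : ∀ k ∈ range (m+1), (((n-k).choose (s+1) : ℤ) - ((n-(k+1)).choose (s+1)))
          = ((n-1-k).choose s : ℤ) := by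
        intro k hk
        simp only [Finset.mem_range] at hk
        have hkn : k + 1 ≤ n := by omega
        have : n - k = (n - 1 - k) + 1 := by omega
        rw [this, Nat.choose_succ_succ]
        have : n - (k+1) = n - 1 - k := by omega
        rw [this]
        push_cast
        ring
      calc ∑ k ∈ range (m+1), (-1:ℤ)^k * (m.choose k) * (((n-k).choose (s+1) : ℤ) - ((n-(k+1)).choose (s+1)))
          = ∑ k ∈ range (m+1), (-1:ℤ)^k * (m.choose k) * ((n-1-k).choose s : ℤ) := by
            apply Finset.sum_congr rfl; intro k hk; rw [h5 k hk]
        _ = if m ≤ s then (((n-1)-m).choose (s-m) : ℤ) else (0:ℤ) := ih (n-1) s (by omega)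
        _ = if m+1 ≤ s+1 then ((n-(m+1)).choose ((s+1)-(m+1)) : ℤ) else (0:ℤ) := by
            have e1 : n - 1 - m = n - (m+1) := by omega
            have e2 : s - m = (s+1) - (m+1) := by omega
            rw [e1, e2]
            simp [Nat.succ_le_succ_iff]

lemma coeff_lemma (l m n : ℕ) (hn : n ≤ l + m) :
    ∑ i ∈ Finset.range (m+1),
        (if i ≤ n then (-1:ℝ)^i * obreshkovAlpha i l m / (Nat.factorial (n-i)) else 0)
      = if n ≤ l then obreshkovAlpha n m l else 0 := by
  have hterm : ∀ i ∈ range (m+1),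
      (if i ≤ n then (-1:ℝ)^i * obreshkovAlpha i l m / (Nat.factorial (n-i)) else 0)
        = ((Nat.factorial (m+l-n) : ℝ) / (Nat.factorial (m+l)))
            * ((-1:ℝ)^i * (m.choose i) * (((m+l-i).choose (m+l-n) : ℕ) : ℝ)) := by
    intro i hi
    simp only [Finset.mem_range] at hi
    by_cases hin : i ≤ n
    · rw [if_pos hin]
      have hfac : (Nat.factorial (m+l-i) : ℝ)
          = ((m+l-i).choose (m+l-n) : ℝ) * (Nat.factorial (m+l-n)) * (Nat.factorial (n-i)) := by
        have h1 : m+l-n ≤ m+l-i := by omega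
        have h2 : (m+l-i) - (m+l-n) = n - i := by omega
        have := Nat.choose_mul_factorial_mul_factorial h1
        rw [h2] at this
        exact_mod_cast this.symm
      unfold obreshkovAlpha
      rw [hfac]
      have hne : (Nat.factorial (n-i) : ℝ) ≠ 0 := by positivity
      field_simp
    · rw [if_neg hin]
      have : (m+l-i).choose (m+l-n) = 0 := by
        apply Nat.choose_eq_zero_of_lt; omega
      rw [this]
      simp
  rw [Finset.sum_congr rfl hterm, ← Finset.mul_sum]
  have hkey := key_int m (m+l) (m+l-n) (by omega)
  have hsum : ∑ i ∈ range (m+1), ((-1:ℝ)^i * (m.choose i) * (((m+l-i).choose (m+l-n) : ℕ) : ℝ))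
      = ((∑ k ∈ range (m+1), (-1:ℤ)^k * (m.choose k) * (((m+l)-k).choose (m+l-n)) : ℤ) : ℝ) := by
    push_cast
    rfl
  rw [hsum, hkey]
  by_cases hnl : n ≤ l
  · rw [if_pos (show m ≤ m+l-n by omega), if_pos hnl]
    have e1 : m+l-m = l := by omega
    have e2 : (m+l-n)-m = l-n := by omega
    rw [e1, e2, Nat.choose_symm]
    · unfold obreshkovAlpha
      rw [show l+m = m+l from Nat.add_comm l m]
      push_cast
      ring
    · exact hnl
  · rw [if_neg (show ¬ (m ≤ m+l-n) by omega), if_neg hnl]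
    simp


lemma exp_tail_isBigO (N : ℕ) (hN : 0 < N) :
    (fun h : ℝ => Real.exp h - ∑ j ∈ Finset.range N, h^j / (Nat.factorial j))
      =O[nhds (0:ℝ)] fun h : ℝ => h^N := by
  rw [Asymptotics.isBigO_iff]
  refine ⟨(N.succ : ℝ) / (Nat.factorial N * N), ?_⟩
  have hev : ∀ᶠ h : ℝ in nhds 0, |h| ≤ 1 := by
    have : Metric.closedBall (0:ℝ) 1 ∈ nhds (0:ℝ) := Metric.closedBall_mem_nhds 0 one_pos
    filter_upwards [this] with h hh
    simpa [Real.norm_eq_abs] using hh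
  filter_upwards [hev] with h hh
  have := Real.exp_bound hh hN
  calc ‖Real.exp h - ∑ j ∈ Finset.range N, h^j / (Nat.factorial j)‖
      ≤ |h|^N * ((N.succ : ℝ) / (Nat.factorial N * N)) := by
        simpa [Real.norm_eq_abs] using this
    _ = (N.succ : ℝ) / (Nat.factorial N * N) * ‖h^N‖ := by
        rw [Real.norm_eq_abs, abs_pow]; ring

/-- The Obreshkov coefficients give the `(l, m)` Padé-type approximation of the
exponential:
`Σ_{i=0}^{m} (−1)^i α_{i,l,m} hⁱ e^h − Σ_{i=0}^{l} α_{i,m,l} hⁱ = O(h^{l+m+1})`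
as `h → 0`. -/
theorem obreshkov_pade_exponential (l m : ℕ) :
    Asymptotics.IsBigO (nhds (0 : ℝ))
      (fun h : ℝ =>
        ∑ i ∈ Finset.range (m + 1),
          (-1 : ℝ) ^ i * obreshkovAlpha i l m * h ^ i * Real.exp h -
        ∑ i ∈ Finset.range (l + 1), obreshkovAlpha i m l * h ^ i)
      (fun h : ℝ => h ^ (l + m + 1)) := by
  set K := l + m + 1 with hK
  have poly_id : ∀ h : ℝ,
      ∑ i ∈ Finset.range (m+1), (-1:ℝ)^i * obreshkovAlpha i l m * h^i *
          (∑ j ∈ Finset.range (K - i), h^j / (Nat.factorial j))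
        = ∑ n ∈ Finset.range (l+1), obreshkovAlpha n m l * h^n := by
    intro h
    have step1 : ∀ i ∈ Finset.range (m+1),
        (-1:ℝ)^i * obreshkovAlpha i l m * h^i *
            (∑ j ∈ Finset.range (K - i), h^j / (Nat.factorial j))
          = ∑ n ∈ Finset.range K,
              (if i ≤ n then (-1:ℝ)^i * obreshkovAlpha i l m / (Nat.factorial (n-i)) * h^n else 0) := by
      intro i hi
      simp only [Finset.mem_range] at hi
      have hiK : i ≤ K := by omega
      rw [← Finset.sum_filter]
      have hfilter : Finset.filter (fun n => i ≤ n) (Finset.range K) = Finset.Ico i K := by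
        ext n; simp [Finset.mem_filter, Finset.mem_range, Finset.mem_Ico, and_comm]
      rw [hfilter, Finset.sum_Ico_eq_sum_range, Finset.mul_sum]
      apply Finset.sum_congr rfl
      intro j _
      have : i + j - i = j := by omega
      rw [this, pow_add]
      ring
    rw [Finset.sum_congr rfl step1, Finset.sum_comm]
    have step2 : ∀ n ∈ Finset.range K,
        ∑ i ∈ Finset.range (m+1),
            (if i ≤ n then (-1:ℝ)^i * obreshkovAlpha i l m / (Nat.factorial (n-i)) * h^n else 0)
          = (if n ≤ l then obreshkovAlpha n m l * h^n else 0) := by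
      intro n hn
      simp only [Finset.mem_range] at hn
      have : ∀ i ∈ Finset.range (m+1),
          (if i ≤ n then (-1:ℝ)^i * obreshkovAlpha i l m / (Nat.factorial (n-i)) * h^n else 0)
            = (if i ≤ n then (-1:ℝ)^i * obreshkovAlpha i l m / (Nat.factorial (n-i)) else 0) * h^n := by
        intro i _; split_ifs <;> simp
      rw [Finset.sum_congr rfl this, ← Finset.sum_mul, coeff_lemma l m n (by omega)]
      split_ifs <;> simp
    rw [Finset.sum_congr rfl step2, ← Finset.sum_filter]
    have : Finset.filter (fun n => n ≤ l) (Finset.range K) = Finset.range (l+1) := by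
      ext n; simp [Finset.mem_filter, Finset.mem_range]; omega
    rw [this]
  have main_eq : ∀ h : ℝ,
      (∑ i ∈ Finset.range (m + 1),
          (-1 : ℝ) ^ i * obreshkovAlpha i l m * h ^ i * Real.exp h -
        ∑ i ∈ Finset.range (l + 1), obreshkovAlpha i m l * h ^ i)
      = ∑ i ∈ Finset.range (m+1),
          (-1:ℝ)^i * obreshkovAlpha i l m * h^i *
            (Real.exp h - ∑ j ∈ Finset.range (K - i), h^j / (Nat.factorial j)) := by
    intro h
    have : ∑ i ∈ Finset.range (m+1),
          (-1:ℝ)^i * obreshkovAlpha i l m * h^i *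
            (Real.exp h - ∑ j ∈ Finset.range (K - i), h^j / (Nat.factorial j))
        = ∑ i ∈ Finset.range (m+1), ((-1:ℝ)^i * obreshkovAlpha i l m * h^i * Real.exp h
            - (-1:ℝ)^i * obreshkovAlpha i l m * h^i *
              (∑ j ∈ Finset.range (K - i), h^j / (Nat.factorial j))) := by
      apply Finset.sum_congr rfl; intro i _; ring
    rw [this, Finset.sum_sub_distrib, poly_id h]
  have : (fun h : ℝ =>
        ∑ i ∈ Finset.range (m + 1),
          (-1 : ℝ) ^ i * obreshkovAlpha i l m * h ^ i * Real.exp h -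
        ∑ i ∈ Finset.range (l + 1), obreshkovAlpha i m l * h ^ i)
      = fun h : ℝ => ∑ i ∈ Finset.range (m+1),
          (-1:ℝ)^i * obreshkovAlpha i l m * h^i *
            (Real.exp h - ∑ j ∈ Finset.range (K - i), h^j / (Nat.factorial j)) := funext main_eq
  rw [this]
  apply Asymptotics.IsBigO.fun_sum
  intro i hi
  simp only [Finset.mem_range] at hi
  have hKi : 0 < K - i := by omega
  have t := exp_tail_isBigO (K - i) hKi
  have hp : (fun h : ℝ => h^i) =O[nhds (0:ℝ)] fun h : ℝ => h^i := isBigO_refl _ _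
  have hmul := hp.mul t
  have hpow : (fun h : ℝ => h^i * h^(K-i)) = fun h : ℝ => h^K := by
    funext h
    rw [← pow_add]
    congr 1
    omega
  rw [hpow] at hmul
  have := hmul.const_mul_left ((-1:ℝ)^i * obreshkovAlpha i l m)
  apply this.congr_left
  intro h
  ring
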